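/- arXiv:2501.12969 — 5 statements merged into one kernel-verified Lean document; each statement's English description precedes it below -/
import Mathlib

section
/- (Single-constraint Lipschitz-only safety, LoSBO case of Proposition 1.) Let g be an L-Lipschitz function from a real normed vector space V to ℝ, let E ≥ 0 be a noise bound, and let S₀ ⊆ V satisfy g(θ) ≥ 0 for all θ ∈ S₀. Suppose a sequence of queries (θₙ)ₙ≥0 and noisy observations yₙ = g(θₙ) + εₙ with |εₙ| ≤ E is given, where the safe sets are defined recursively by Sₙ₊₁ = Sₙ ∪ {θ' ∈ V : yₙ − E − L‖θₙ − θ'‖ ≥ 0} and each query satisfies θₙ ∈ Sₙ. Then for every n ≥ 0 and every θ ∈ Sₙ we have g(θ) ≥ 0; in particular g(θₙ) ≥ 0 for all n. -/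
/-- Single-constraint Lipschitz-only safety (LoSBO case of
Proposition 1). All points in every safe set `Sₙ` are safe, in particular all
queried parameters are safe. -/
theorem losbo_safety {V : Type*} [NormedAddCommGroup V] [NormedSpace ℝ V]
    (g : V → ℝ) (L E : ℝ) (hL : 0 ≤ L) (hE : 0 ≤ E)
    (hLip : ∀ a b : V, |g a - g b| ≤ L * ‖a - b‖)
    (S : ℕ → Set V) (θ : ℕ → V) (ε y : ℕ → ℝ)
    (hS0 : ∀ x ∈ S 0, g x ≥ 0)
    (hy : ∀ n, y n = g (θ n) + ε n)
    (hε : ∀ n, |ε n| ≤ E)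
    (hquery : ∀ n, θ n ∈ S n)
    (hrec : ∀ n, S (n + 1) = S n ∪ {θ' : V | y n - E - L * ‖θ n - θ'‖ ≥ 0}) :
    (∀ n, ∀ x ∈ S n, g x ≥ 0) ∧ (∀ n, g (θ n) ≥ 0) := by
  have main : ∀ n, ∀ x ∈ S n, g x ≥ 0 := by
    intro n
    induction n with
    | zero => exact hS0
    | succ n ih =>
      intro x hx
      rw [hrec n] at hx
      rcases hx with hx | hx
      · exact ih x hx
      · simp only [Set.mem_setOf_eq] at hx
        have h1 : g (θ n) - g x ≤ L * ‖θ n - x‖ := (abs_le.mp (hLip (θ n) x)).2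
        have h2 : ε n ≤ E := (abs_le.mp (hε n)).2
        have := hy n
        linarith
  exact ⟨main, fun n => main n (θ n) (hquery n)⟩
end

section
/- (Proposition 1: safety of MCLoSBO.) Let q ≥ 1 and for each i ∈ {1,…,q} let gᵢ be an Lᵢ-Lipschitz function from a real normed vector space V to ℝ with noise bound Eᵢ ≥ 0. Let S₀ ⊆ V satisfy gᵢ(θ) ≥ 0 for all i and all θ ∈ S₀. Suppose a sequence of queries (θₙ)ₙ≥0 and noisy observations yᵢ,ₙ = gᵢ(θₙ) + εᵢ,ₙ with |εᵢ,ₙ| ≤ Eᵢ is given, where the safe sets are defined recursively by Sₙ₊₁ = Sₙ ∪ (⋂ᵢ₌₁..q {θ' ∈ V : yᵢ,ₙ − Eᵢ − Lᵢ‖θₙ − θ'‖ ≥ 0}) and each query satisfies θₙ ∈ Sₙ. Then for every n ≥ 0, every θ ∈ Sₙ, and every i ∈ {1,…,q}, we have gᵢ(θ) ≥ 0; in particular gᵢ(θₙ) ≥ 0 for all i and n. -/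
/-- Proposition 1: safety of MCLoSBO: with `q ≥ 1` constraints,
all points in every safe set `Sₙ` satisfy every constraint, in particular all
queried parameters are safe for every constraint. -/
theorem mclosbo_safety {V : Type*} [NormedAddCommGroup V] [NormedSpace ℝ V]
    (q : ℕ) (hq : 1 ≤ q)
    (g : Fin q → V → ℝ) (L E : Fin q → ℝ)
    (hL : ∀ i, 0 ≤ L i) (hE : ∀ i, 0 ≤ E i)
    (hLip : ∀ i, ∀ a b : V, |g i a - g i b| ≤ L i * ‖a - b‖)
    (S : ℕ → Set V) (θ : ℕ → V) (ε y : Fin q → ℕ → ℝ)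
    (hS0 : ∀ i, ∀ x ∈ S 0, g i x ≥ 0)
    (hy : ∀ i n, y i n = g i (θ n) + ε i n)
    (hε : ∀ i n, |ε i n| ≤ E i)
    (hquery : ∀ n, θ n ∈ S n)
    (hrec : ∀ n, S (n + 1) =
      S n ∪ ⋂ i : Fin q, {θ' : V | y i n - E i - L i * ‖θ n - θ'‖ ≥ 0}) :
    (∀ n, ∀ x ∈ S n, ∀ i, g i x ≥ 0) ∧ (∀ n, ∀ i, g i (θ n) ≥ 0) := by
  have main : ∀ n, ∀ x ∈ S n, ∀ i, g i x ≥ 0 := by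
    intro n
    induction n with
    | zero => intro x hx i; exact hS0 i x hx
    | succ n ih =>
      intro x hx i
      rw [hrec n] at hx
      rcases hx with hx | hx
      · exact ih x hx i
      · have hxi := Set.mem_iInter.mp hx i
        have h1 : y i n - E i - L i * ‖θ n - x‖ ≥ 0 := hxi
        have h2 : g i (θ n) - g i x ≤ L i * ‖θ n - x‖ :=
          le_trans (le_abs_self _) (hLip i (θ n) x)
        have h3 : ε i n ≤ E i := le_trans (le_abs_self _) (hε i n)
        have := hy i n
        linarith
  exact ⟨main, fun n i => main n (θ n) (hquery n) i⟩
end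

section
/- (Induction step of Proposition 1.) Let q ≥ 1 and for each i ∈ {1,…,q} let gᵢ be an Lᵢ-Lipschitz function from a real normed vector space V to ℝ with noise bound Eᵢ ≥ 0. Let S ⊆ V be a set with gᵢ(θ) ≥ 0 for all i and all θ ∈ S, let θ̄ ∈ S, and let yᵢ = gᵢ(θ̄) + εᵢ be noisy observations with |εᵢ| ≤ Eᵢ. Then the enlarged set S ∪ (⋂ᵢ₌₁..q {θ' ∈ V : yᵢ − Eᵢ − Lᵢ‖θ̄ − θ'‖ ≥ 0}) also satisfies gᵢ(θ) ≥ 0 for all i and all its elements θ. -/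
/-- Induction step of Proposition 1: if `S` is safe for all
constraints and `θ̄ ∈ S` with noisy observations `yᵢ = gᵢ θ̄ + εᵢ`, `|εᵢ| ≤ Eᵢ`,
then the enlarged set `S ∪ ⋂ᵢ {θ' | yᵢ − Eᵢ − Lᵢ‖θ̄ − θ'‖ ≥ 0}` is also safe. -/
theorem mclosbo_induction_step {V : Type*} [NormedAddCommGroup V] [NormedSpace ℝ V]
    (q : ℕ) (hq : 1 ≤ q)
    (g : Fin q → V → ℝ) (L E : Fin q → ℝ)
    (hL : ∀ i, 0 ≤ L i) (hE : ∀ i, 0 ≤ E i)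
    (hLip : ∀ i, ∀ a b : V, |g i a - g i b| ≤ L i * ‖a - b‖)
    (S : Set V) (hS : ∀ i, ∀ x ∈ S, g i x ≥ 0)
    (θbar : V) (hθbar : θbar ∈ S)
    (ε y : Fin q → ℝ)
    (hy : ∀ i, y i = g i θbar + ε i)
    (hε : ∀ i, |ε i| ≤ E i) :
    ∀ x ∈ S ∪ ⋂ i : Fin q, {θ' : V | y i - E i - L i * ‖θbar - θ'‖ ≥ 0},
      ∀ i, g i x ≥ 0 := by
  intro x hx i
  rcases hx with hx | hx
  · exact hS i x hx
  · have h1 : y i - E i - L i * ‖θbar - x‖ ≥ 0 := Set.mem_iInter.mp hx i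
    have h2 := (abs_le.mp (hLip i θbar x)).2
    have h3 := (abs_le.mp (hε i)).2
    have := hy i
    linarith
end

section
/- (Soundness of the safe-set update of equation (5), multiple constraints.) Let q ≥ 1 and for each i ∈ {1,…,q} let gᵢ be an Lᵢ-Lipschitz function from a real normed vector space V to ℝ with noise bound Eᵢ ≥ 0. Let S ⊆ V, and suppose that for each θ̄ ∈ S and each i there is a noisy observation yᵢ(θ̄) = gᵢ(θ̄) + εᵢ(θ̄) with |εᵢ(θ̄)| ≤ Eᵢ. Then the set S' := ⋂ᵢ₌₁..q ⋃_{θ̄ ∈ S} {θ' ∈ V : yᵢ(θ̄) − Eᵢ − Lᵢ‖θ̄ − θ'‖ ≥ 0} satisfies gᵢ(θ') ≥ 0 for every θ' ∈ S' and every i ∈ {1,…,q}. -/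
/-- Soundness of the safe-set update of equation (5), multiple
constraints: the intersection over constraints of the unions of noise-shrunk
Lipschitz cones consists only of points safe for every constraint. -/
theorem mclosbo_update_sound {V : Type*} [NormedAddCommGroup V] [NormedSpace ℝ V]
    (q : ℕ) (hq : 1 ≤ q)
    (g : Fin q → V → ℝ) (L E : Fin q → ℝ)
    (hL : ∀ i, 0 ≤ L i) (hE : ∀ i, 0 ≤ E i)
    (hLip : ∀ i, ∀ a b : V, |g i a - g i b| ≤ L i * ‖a - b‖)
    (S : Set V) (y ε : Fin q → V → ℝ)
    (hy : ∀ i, ∀ θbar ∈ S, y i θbar = g i θbar + ε i θbar)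
    (hε : ∀ i, ∀ θbar ∈ S, |ε i θbar| ≤ E i) :
    ∀ θ' ∈ ⋂ i : Fin q, ⋃ θbar ∈ S,
        {x : V | y i θbar - E i - L i * ‖θbar - x‖ ≥ 0},
      ∀ i, g i θ' ≥ 0 := by
  intro θ' hθ' i
  have h := Set.mem_iInter.mp hθ' i
  obtain ⟨θbar, hθbar, hmem⟩ := Set.mem_iUnion₂.mp h
  have hcone : y i θbar - E i - L i * ‖θbar - θ'‖ ≥ 0 := hmem
  have hyb := hy i θbar hθbar
  have hεb := hε i θbar hθbar
  have hlip := hLip i θbar θ'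
  have h1 : g i θbar - g i θ' ≤ L i * ‖θbar - θ'‖ := (abs_le.mp hlip).2
  have h2 : ε i θbar ≤ E i := (abs_le.mp hεb).2
  nlinarith
end

section
/- (Safety with respect to the objective under the LoSBO reduction.) Let f be an L-Lipschitz function from a real normed vector space V to ℝ with noise bound E ≥ 0, regarded as its own safety constraint (g₁ = f, q = 1). Let S₀ ⊆ V satisfy f(θ) ≥ 0 for all θ ∈ S₀, let queries θₙ ∈ Sₙ produce noisy observations yₙ = f(θₙ) + εₙ with |εₙ| ≤ E, and define Sₙ₊₁ = Sₙ ∪ {θ' ∈ V : yₙ − E − L‖θₙ − θ'‖ ≥ 0}. Then for any tuning factor β > 0 and any selection of queries from the sets of potential maximizers and expanders (which are subsets of Sₙ), all queried parameters satisfy f(θₙ) ≥ 0; more precisely, any sequence of queries with θₙ ∈ Sₙ for all n satisfies f(θₙ) ≥ 0 for all n. -/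
/-- Safety w.r.t. the objective under the LoSBO reduction,
`g₁ = f`, `q = 1`: for any tuning factor `β > 0`, any sequence of queries
with `θₙ ∈ Sₙ` (in particular queries chosen from the maximizer and expander
sets, which are subsets of `Sₙ`) satisfies `f (θₙ) ≥ 0` for all `n`. -/
theorem losbo_objective_safety {V : Type*} [NormedAddCommGroup V] [NormedSpace ℝ V]
    (f : V → ℝ) (L E : ℝ) (hL : 0 ≤ L) (hE : 0 ≤ E)
    (hLip : ∀ a b : V, |f a - f b| ≤ L * ‖a - b‖)
    (β : ℝ) (hβ : 0 < β)
    (S : ℕ → Set V) (θ : ℕ → V) (ε y : ℕ → ℝ)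
    (hS0 : ∀ x ∈ S 0, f x ≥ 0)
    (hy : ∀ n, y n = f (θ n) + ε n)
    (hε : ∀ n, |ε n| ≤ E)
    (hquery : ∀ n, θ n ∈ S n)
    (hrec : ∀ n, S (n + 1) = S n ∪ {θ' : V | y n - E - L * ‖θ n - θ'‖ ≥ 0}) :
    ∀ n, f (θ n) ≥ 0 := by
  have key : ∀ n, ∀ x ∈ S n, f x ≥ 0 := by
    intro n
    induction n with
    | zero => exact hS0
    | succ n ih =>
      intro x hx
      rw [hrec n] at hx
      rcases hx with hx | hx
      · exact ih x hx
      · have hmem : y n - E - L * ‖θ n - x‖ ≥ 0 := hx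
        have hfθ : f (θ n) ≥ y n - E := by
          have := (abs_le.mp (hε n)).2
          rw [hy n]; linarith
        have hlip := (abs_le.mp (hLip (θ n) x)).2
        linarith
  intro n
  exact key n (θ n) (hquery n)
end
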